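/- Let p ≥ 1, T > 0, and let x : [0,T] → ℝ^d be right-continuous with left limits (càdlàg) and of finite p-variation. Let (t_n)_{n≥1} be an injective sequence in (0,T] containing every discontinuity point of x, write j(t_n) = x(t_n) − x(t_n⁻) for the jump at t_n, and assume Σ_{n≥1} ‖j(t_n)‖^p < ∞. Fix δ > 0 and define τ^δ : [0,T] → [0, T + δ Σ_n ‖j(t_n)‖^p] by τ^δ(t) = t + δ Σ_{n≥1} ‖j(t_n)‖^p · 1_{{t_n ≤ t}}. Let x^δ : [0, τ^δ(T)] → ℝ^d be the continuous path determined by: x^δ(τ^δ(t)) = x(t) for all t ∈ [0,T], and for each n and s ∈ [τ^δ(t_n) − δ‖j(t_n)‖^p, τ^δ(t_n)), x^δ(s) = x(t_n⁻) + (s − (τ^δ(t_n) − δ‖j(t_n)‖^p)) · j(t_n) · δ^{−1} ‖j(t_n)‖^{−p} (i.e. x^δ traverses each jump linearly during the inserted fictitious time). Then the p-variation of x^δ over [0, τ^δ(T)] equals the p-variation of x over [0,T]: ‖x^δ‖_{p,[0,τ^δ(T)]} = ‖x‖_{p,[0,T]}. -/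

import Mathlib

open Filter

/-- The set of partition sums `Σ_k ‖f(t_k) − f(t_{k−1})‖^p` over all finite partitions
`a = t_0 ≤ t_1 ≤ … ≤ t_m = b` of `[a,b]`; its supremum is `‖f‖_{p,[a,b]}^p`, so that
`‖f‖_{p,[a,b]} = (sSup (pVarSums p a b f)) ^ (1/p)`. -/
def pVarSums {E : Type*} [NormedAddCommGroup E] (p a b : ℝ) (f : ℝ → E) : Set ℝ :=
  {S | ∃ (m : ℕ) (t : Fin (m + 1) → ℝ), Monotone t ∧ t 0 = a ∧ t (Fin.last m) = b ∧
    S = ∑ i : Fin m, ‖f (t i.succ) - f (t i.castSucc)‖ ^ p}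

open List

section VarAux

noncomputable def vsum (p : ℝ) {E : Type*} [NormedAddCommGroup E] : List E → ℝ
  | a :: b :: l => ‖b - a‖ ^ p + vsum p (b :: l)
  | _ => 0

@[simp] lemma vsum_nil (p : ℝ) {E : Type*} [NormedAddCommGroup E] : vsum p ([] : List E) = 0 := rfl
@[simp] lemma vsum_single (p : ℝ) {E : Type*} [NormedAddCommGroup E] (a : E) : vsum p [a] = 0 := rfl
@[simp] lemma vsum_cons₂ (p : ℝ) {E : Type*} [NormedAddCommGroup E] (a b : E) (l : List E) :
    vsum p (a :: b :: l) = ‖b - a‖ ^ p + vsum p (b :: l) := rfl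

lemma vsum_nonneg (p : ℝ) {E : Type*} [NormedAddCommGroup E] (l : List E) : 0 ≤ vsum p l := by
  induction l with
  | nil => simp
  | cons a l ih =>
    cases l with
    | nil => simp
    | cons b m =>
      simp only [vsum_cons₂]
      exact add_nonneg (Real.rpow_nonneg (norm_nonneg _) _) ih

lemma vsum_le_cons (p : ℝ) {E : Type*} [NormedAddCommGroup E] (a : E) (l : List E) :
    vsum p l ≤ vsum p (a :: l) := by
  cases l with
  | nil => simp
  | cons b m =>
    simp only [vsum_cons₂]
    exact le_add_of_nonneg_left (Real.rpow_nonneg (norm_nonneg _) _)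

lemma vsum_le_concat (p : ℝ) {E : Type*} [NormedAddCommGroup E] (a : E) (l : List E) :
    vsum p l ≤ vsum p (l ++ [a]) := by
  induction l with
  | nil => simp [vsum_nonneg]
  | cons b l ih =>
    cases l with
    | nil => simpa using vsum_nonneg p [b, a]
    | cons c m =>
      simp only [List.cons_append, vsum_cons₂] at *
      exact add_le_add_right ih _

lemma vsum_ofFn (p : ℝ) {E : Type*} [NormedAddCommGroup E] :
    ∀ (m : ℕ) (g : Fin (m + 1) → E),
      vsum p (List.ofFn g) = ∑ i : Fin m, ‖g i.succ - g i.castSucc‖ ^ p := by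
  intro m
  induction m with
  | zero => intro g; simp [List.ofFn_succ]
  | succ m ih =>
    intro g
    rw [List.ofFn_succ, List.ofFn_succ]
    have h0 : (Fin.succ 0 : Fin (m+2)) = 1 := rfl
    rw [h0]
    have h2 : vsum p (g 0 :: g 1 :: List.ofFn fun i : Fin m => g i.succ.succ) =
        ‖g 1 - g 0‖ ^ p + vsum p (g 1 :: List.ofFn fun i : Fin m => g i.succ.succ) := rfl
    have h3 : (g 1 :: List.ofFn fun i : Fin m => g i.succ.succ) =
        List.ofFn (fun i : Fin (m + 1) => g i.succ) := by
      rw [List.ofFn_succ]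
      rfl
    rw [h2, h3, ih, Fin.sum_univ_succ]
    simp

lemma conv_max {E : Type*} [NormedAddCommGroup E] [NormedSpace ℝ E] {p : ℝ} (hp : 1 ≤ p)
    (c₁ u₁ c₂ u₂ : E) {a b θ : ℝ} (hθ : θ ∈ Set.Icc a b) :
    ‖c₁ + θ • u₁‖ ^ p + ‖c₂ + θ • u₂‖ ^ p ≤
      max (‖c₁ + a • u₁‖ ^ p + ‖c₂ + a • u₂‖ ^ p) (‖c₁ + b • u₁‖ ^ p + ‖c₂ + b • u₂‖ ^ p) := by
  rcases eq_or_lt_of_le hθ.1 with h | h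
  · subst h; exact le_max_left _ _
  rcases eq_or_lt_of_le hθ.2 with h2 | h2
  · subst h2; exact le_max_right _ _
  have hab : a < b := lt_trans h h2
  set lam : ℝ := (b - θ) / (b - a) with hlam
  set mu : ℝ := (θ - a) / (b - a) with hmu
  have hba : (0:ℝ) < b - a := by linarith
  have hlam0 : 0 ≤ lam := div_nonneg (by linarith) hba.le
  have hmu0 : 0 ≤ mu := div_nonneg (by linarith) hba.le
  have hsum1 : lam + mu = 1 := by
    rw [hlam, hmu, ← add_div]
    rw [show b - θ + (θ - a) = b - a by ring]
    exact div_self hba.ne'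
  have hcomb : lam * a + mu * b = θ := by
    rw [hlam, hmu, div_mul_eq_mul_div, div_mul_eq_mul_div, ← add_div,
      div_eq_iff hba.ne']
    ring
  have key : ∀ (c u : E), ‖c + θ • u‖ ^ p ≤ lam * ‖c + a • u‖ ^ p + mu * ‖c + b • u‖ ^ p := by
    intro c u
    have hdecomp : c + θ • u = lam • (c + a • u) + mu • (c + b • u) := by
      rw [smul_add, smul_add, smul_smul, smul_smul, ← hcomb]
      rw [add_add_add_comm, ← add_smul, hsum1, one_smul, ← add_smul]
    have hnorm : ‖c + θ • u‖ ≤ lam * ‖c + a • u‖ + mu * ‖c + b • u‖ := by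
      rw [hdecomp]
      calc ‖lam • (c + a • u) + mu • (c + b • u)‖ ≤
          ‖lam • (c + a • u)‖ + ‖mu • (c + b • u)‖ := norm_add_le _ _
        _ = lam * ‖c + a • u‖ + mu * ‖c + b • u‖ := by
            rw [norm_smul, norm_smul, Real.norm_eq_abs, Real.norm_eq_abs,
              abs_of_nonneg hlam0, abs_of_nonneg hmu0]
    calc ‖c + θ • u‖ ^ p ≤ (lam * ‖c + a • u‖ + mu * ‖c + b • u‖) ^ p :=
          Real.rpow_le_rpow (norm_nonneg _) hnorm (by linarith)
      _ ≤ lam * ‖c + a • u‖ ^ p + mu * ‖c + b • u‖ ^ p := by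
          have := (convexOn_rpow hp).2 (Set.mem_Ici.2 (norm_nonneg (c + a • u)))
            (Set.mem_Ici.2 (norm_nonneg (c + b • u))) hlam0 hmu0 hsum1
          simpa [smul_eq_mul] using this
  calc ‖c₁ + θ • u₁‖ ^ p + ‖c₂ + θ • u₂‖ ^ p ≤
      (lam * ‖c₁ + a • u₁‖ ^ p + mu * ‖c₁ + b • u₁‖ ^ p) +
      (lam * ‖c₂ + a • u₂‖ ^ p + mu * ‖c₂ + b • u₂‖ ^ p) := add_le_add (key _ _) (key _ _)
    _ = lam * (‖c₁ + a • u₁‖ ^ p + ‖c₂ + a • u₂‖ ^ p) +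
        mu * (‖c₁ + b • u₁‖ ^ p + ‖c₂ + b • u₂‖ ^ p) := by ring
    _ ≤ lam * max (‖c₁ + a • u₁‖ ^ p + ‖c₂ + a • u₂‖ ^ p) (‖c₁ + b • u₁‖ ^ p + ‖c₂ + b • u₂‖ ^ p) +
        mu * max (‖c₁ + a • u₁‖ ^ p + ‖c₂ + a • u₂‖ ^ p) (‖c₁ + b • u₁‖ ^ p + ‖c₂ + b • u₂‖ ^ p) := by
          gcongr
          · exact le_max_left _ _
          · exact le_max_right _ _
    _ = max _ _ := by rw [← add_mul, hsum1, one_mul]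

lemma list_mem_pVarSums {E : Type*} [NormedAddCommGroup E] (p a b : ℝ) (f : ℝ → E)
    (u : List ℝ) (hchain : List.Chain' (· ≤ ·) u) (h1 : u.head? = some a)
    (h2 : u.getLast? = some b) : vsum p (u.map f) ∈ pVarSums p a b f := by
  cases u with
  | nil => simp at h1
  | cons c u₀ =>
    have hca : c = a := by simpa using h1
    subst hca
    have hm : (c :: u₀).length = u₀.length + 1 := by simp
    refine ⟨u₀.length, fun i => (c :: u₀).get (Fin.cast hm.symm i), ?_, ?_, ?_, ?_⟩
    · intro i j hij
      rcases eq_or_lt_of_le hij with h | h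
      · rw [h]
      · exact List.pairwise_iff_get.1 (List.isChain_iff_pairwise.mp hchain) _ _
          (by exact h)
    · show (c :: u₀).get (Fin.cast hm.symm 0) = c
      have h0 : Fin.cast hm.symm (0 : Fin (u₀.length+1)) = ⟨0, by omega⟩ := by
        ext
        simp [Fin.cast]
      rw [h0]
      rfl
    · show (c :: u₀).get (Fin.cast hm.symm (Fin.last u₀.length)) = b
      have hne : (c :: u₀) ≠ [] := by simp
      have h2' : (c :: u₀).getLast hne = b := by
        rw [List.getLast?_eq_getLast hne] at h2
        simpa using h2
      rw [← h2', List.getLast_eq_getElem]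
      congr 1
    · have hofn : (c :: u₀) = List.ofFn (fun i => (c :: u₀).get (Fin.cast hm.symm i)) := by
        apply List.ext_get (by simp)
        intro n hn1 hn2
        rw [List.get_ofFn]
        congr 1
      have e : vsum p ((c :: u₀).map f) =
          vsum p ((List.ofFn (fun i => (c :: u₀).get (Fin.cast hm.symm i))).map f) :=
        congrArg (fun l => vsum p (l.map f)) hofn
      rw [e, List.map_ofFn, vsum_ofFn]
      rfl


section TagStuff

variable {E : Type*} [NormedAddCommGroup E] [NormedSpace ℝ E]

def tval (x xm : ℝ → E) (tseq : ℕ → ℝ) (j : ℕ → E) : ℝ ⊕ ℕ × ℝ → E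
  | .inl t => x t
  | .inr (n, θ) => xm (tseq n) + θ • j n

def ttm (tseq : ℕ → ℝ) : ℝ ⊕ ℕ × ℝ → ℝ
  | .inl t => t
  | .inr (n, _) => tseq n

def taux : ℝ ⊕ ℕ × ℝ → ℝ
  | .inl _ => 1
  | .inr (_, θ) => θ

def kle (tseq : ℕ → ℝ) (q r : ℝ ⊕ ℕ × ℝ) : Prop :=
  ttm tseq q < ttm tseq r ∨ (ttm tseq q = ttm tseq r ∧ taux q ≤ taux r)

def TValid (T : ℝ) : ℝ ⊕ ℕ × ℝ → Prop
  | .inl t => t ∈ Set.Icc 0 T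
  | .inr (_, θ) => θ ∈ Set.Icc (0:ℝ) 1

def TExt : ℝ ⊕ ℕ × ℝ → Prop
  | .inl _ => True
  | .inr (_, θ) => θ = 0 ∨ θ = 1

lemma kle_trans {tseq : ℕ → ℝ} {a b c : ℝ ⊕ ℕ × ℝ} (h1 : kle tseq a b) (h2 : kle tseq b c) :
    kle tseq a c := by
  rcases h1 with h1 | ⟨h1, h1'⟩ <;> rcases h2 with h2 | ⟨h2, h2'⟩
  · exact Or.inl (lt_trans h1 h2)
  · exact Or.inl (h2 ▸ h1)
  · exact Or.inl (h1 ▸ h2)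
  · exact Or.inr ⟨h1.trans h2, le_trans h1' h2'⟩

lemma kle_up {tseq : ℕ → ℝ} {v : ℝ ⊕ ℕ × ℝ} {n : ℕ} {θ θ' : ℝ} (hθ : θ ≤ θ')
    (h : kle tseq v (.inr (n, θ))) : kle tseq v (.inr (n, θ')) := by
  rcases h with h | ⟨h, h'⟩
  · exact Or.inl h
  · exact Or.inr ⟨h, by simpa [taux] using le_trans h' hθ⟩

lemma kle_of_ext_left {tseq : ℕ → ℝ} (hinj : Function.Injective tseq)
    {v : ℝ ⊕ ℕ × ℝ} (hvext : TExt v) {n : ℕ} {θ : ℝ} (hθ1 : θ < 1)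
    (hkle : kle tseq v (.inr (n, θ))) : kle tseq v (.inr (n, 0)) := by
  rcases hkle with h | ⟨h, h'⟩
  · exact Or.inl h
  · cases v with
    | inl t =>
      exfalso
      simp only [taux] at h'
      linarith
    | inr q =>
      obtain ⟨m, θv⟩ := q
      simp only [ttm] at h
      have hmn : m = n := hinj h
      subst hmn
      simp only [taux] at h'
      simp only [TExt] at hvext
      rcases hvext with h0 | h1
      · exact Or.inr ⟨rfl, by simp [taux, h0]⟩
      · exfalso; rw [h1] at h'; linarith

end TagStuff

lemma phase1 {E : Type*} [NormedAddCommGroup E] [NormedSpace ℝ E] {p : ℝ} (hp : 1 ≤ p)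
    (x xm : ℝ → E) {tseq : ℕ → ℝ} (hinj : Function.Injective tseq) (j : ℕ → E) (T : ℝ) :
    ∀ (L : List (ℝ ⊕ ℕ × ℝ)) (v : ℝ ⊕ ℕ × ℝ), TExt v →
      List.Chain' (kle tseq) (v :: L) → (∀ q ∈ L, TValid T q) →
      ∃ L' : List (ℝ ⊕ ℕ × ℝ),
        List.Chain' (kle tseq) (v :: L') ∧ (∀ q ∈ L', TValid T q) ∧ (∀ q ∈ L', TExt q) ∧
        vsum p (List.map (tval x xm tseq j) (v :: L)) ≤
          vsum p (List.map (tval x xm tseq j) (v :: L')) := by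
  have hp0 : p ≠ 0 := by positivity
  have hstep : ∀ a b a' b' S : ℝ, a + b ≤ a' + b' → a + (b + S) ≤ a' + (b' + S) := by
    intros; linarith
  intro L
  induction L with
  | nil =>
    intro v _ _ _
    exact ⟨[], List.isChain_singleton v, by simp, by simp, le_refl _⟩
  | cons q M ih =>
    intro v hvext hchain hvalid
    have hKvq : kle tseq v q := (List.isChain_cons_cons.1 hchain).1
    have hchainqM : List.Chain' (kle tseq) (q :: M) := (List.isChain_cons_cons.1 hchain).2
    have hvalidq : TValid T q := hvalid q (by simp)
    have hvalidM : ∀ r ∈ M, TValid T r := fun r hr => hvalid r (by simp [hr])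
    by_cases hqext : TExt q
    · obtain ⟨M', h1, h2, h3, h4⟩ := ih q hqext hchainqM hvalidM
      refine ⟨q :: M', List.isChain_cons_cons.2 ⟨hKvq, h1⟩, ?_, ?_, ?_⟩
      · intro r hr; rcases List.mem_cons.1 hr with h | h
        · exact h ▸ hvalidq
        · exact h2 r h
      · intro r hr; rcases List.mem_cons.1 hr with h | h
        · exact h ▸ hqext
        · exact h3 r h
      · simp only [List.map_cons] at h4 ⊢
        rw [vsum_cons₂, vsum_cons₂]
        exact add_le_add_right h4 _
    · -- q is an interior segment point
      cases q with
      | inl t => exact absurd trivial hqext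
      | inr nθ =>
        obtain ⟨n, θ⟩ := nθ
        have hθmem : θ ∈ Set.Icc (0:ℝ) 1 := hvalidq
        have hθ0 : 0 ≤ θ := hθmem.1
        have hθle1 : θ ≤ 1 := hθmem.2
        have hθlt1 : θ < 1 := by
          rcases lt_or_eq_of_le hθle1 with h | h
          · exact h
          · exact absurd (Or.inr h) hqext
        have e1 : ∀ ϑ : ℝ, ‖tval x xm tseq j (Sum.inr (n, ϑ)) - tval x xm tseq j v‖ =
            ‖xm (tseq n) - tval x xm tseq j v + ϑ • j n‖ := by
          intro ϑ
          have : tval x xm tseq j (Sum.inr (n, ϑ)) = xm (tseq n) + ϑ • j n := rfl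
          rw [this]; congr 1; abel
        cases M with
        | nil =>
          have hconv := conv_max hp (xm (tseq n) - tval x xm tseq j v) (j n) (0 : E) (0 : E)
            (a := 0) (b := 1) ⟨hθ0, hθle1⟩
          have hz : ∀ ϑ : ℝ, ‖(0:E) + ϑ • (0:E)‖ ^ p = 0 := by
            intro ϑ; simp [Real.zero_rpow hp0]
          rw [hz, hz, hz, add_zero, add_zero, add_zero, ← e1, ← e1, ← e1] at hconv
          rcases max_cases
            (‖tval x xm tseq j (Sum.inr (n, (0:ℝ))) - tval x xm tseq j v‖ ^ p)
            (‖tval x xm tseq j (Sum.inr (n, (1:ℝ))) - tval x xm tseq j v‖ ^ p) with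
            ⟨hmax, _⟩ | ⟨hmax, _⟩ <;> rw [hmax] at hconv
          · refine ⟨[Sum.inr (n, 0)], ?_, ?_, ?_, ?_⟩
            · exact List.isChain_pair.2 (kle_of_ext_left hinj hvext hθlt1 hKvq)
            · intro r hr; simp only [List.mem_singleton] at hr; subst hr
              exact ⟨le_refl 0, zero_le_one⟩
            · intro r hr; simp only [List.mem_singleton] at hr; subst hr; exact Or.inl rfl
            · simp only [List.map_cons, List.map_nil, vsum_cons₂, vsum_single, add_zero]
              exact hconv
          · refine ⟨[Sum.inr (n, 1)], ?_, ?_, ?_, ?_⟩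
            · exact List.isChain_pair.2 (kle_up hθle1 hKvq)
            · intro r hr; simp only [List.mem_singleton] at hr; subst hr
              exact ⟨zero_le_one, le_refl 1⟩
            · intro r hr; simp only [List.mem_singleton] at hr; subst hr; exact Or.inr rfl
            · simp only [List.map_cons, List.map_nil, vsum_cons₂, vsum_single, add_zero]
              exact hconv
        | cons h M₂ =>
          have hKqh : kle tseq (Sum.inr (n, θ)) h := (List.isChain_cons_cons.1 hchainqM).1
          have hchainhM₂ : List.Chain' (kle tseq) (h :: M₂) := (List.isChain_cons_cons.1 hchainqM).2
          have e2 : ∀ ϑ : ℝ, ‖tval x xm tseq j h - tval x xm tseq j (Sum.inr (n, ϑ))‖ =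
              ‖tval x xm tseq j h - xm (tseq n) + ϑ • -j n‖ := by
            intro ϑ
            have h0 : tval x xm tseq j (Sum.inr (n, ϑ)) = xm (tseq n) + ϑ • j n := rfl
            rw [h0, smul_neg]; congr 1; abel
          have assemble : ∀ q' : ℝ ⊕ ℕ × ℝ, TExt q' → TValid T q' → kle tseq v q' →
              kle tseq q' h →
              (‖tval x xm tseq j (Sum.inr (n, θ)) - tval x xm tseq j v‖ ^ p +
                ‖tval x xm tseq j h - tval x xm tseq j (Sum.inr (n, θ))‖ ^ p ≤
               ‖tval x xm tseq j q' - tval x xm tseq j v‖ ^ p +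
                ‖tval x xm tseq j h - tval x xm tseq j q'‖ ^ p) →
              ∃ L' : List (ℝ ⊕ ℕ × ℝ),
                List.Chain' (kle tseq) (v :: L') ∧ (∀ r ∈ L', TValid T r) ∧
                (∀ r ∈ L', TExt r) ∧
                vsum p (List.map (tval x xm tseq j) (v :: Sum.inr (n, θ) :: h :: M₂)) ≤
                  vsum p (List.map (tval x xm tseq j) (v :: L')) := by
            intro q' hext' hvalid' hvq' hq'h hbound
            obtain ⟨M', c1, c2, c3, c4⟩ := ih q' hext'
              (List.isChain_cons_cons.2 ⟨hq'h, hchainhM₂⟩) hvalidM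
            refine ⟨q' :: M', List.isChain_cons_cons.2 ⟨hvq', c1⟩, ?_, ?_, ?_⟩
            · intro r hr; rcases List.mem_cons.1 hr with hh | hh
              · exact hh ▸ hvalid'
              · exact c2 r hh
            · intro r hr; rcases List.mem_cons.1 hr with hh | hh
              · exact hh ▸ hext'
              · exact c3 r hh
            · simp only [List.map_cons] at c4 ⊢
              rw [vsum_cons₂, vsum_cons₂, vsum_cons₂]
              rw [vsum_cons₂] at c4
              exact le_trans (hstep _ _ _ _ _ hbound) (add_le_add_right c4 _)
          by_cases hsame : ∃ θ₂ : ℝ, h = Sum.inr (n, θ₂)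
          · obtain ⟨θ₂, rfl⟩ := hsame
            have hθθ₂ : θ ≤ θ₂ := by
              rcases hKqh with hlt | ⟨_, hle⟩
              · exfalso; exact lt_irrefl _ hlt
              · exact hle
            have hθ₂mem : θ₂ ∈ Set.Icc (0:ℝ) 1 :=
              hvalidM (Sum.inr (n, θ₂)) (by simp)
            have hconv := conv_max hp (xm (tseq n) - tval x xm tseq j v) (j n)
              (tval x xm tseq j (Sum.inr (n, θ₂)) - xm (tseq n)) (-j n)
              (a := 0) (b := θ₂) ⟨hθ0, hθθ₂⟩
            rw [← e1, ← e2, ← e1, ← e2, ← e1, ← e2] at hconv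
            rcases max_cases
              (‖tval x xm tseq j (Sum.inr (n, (0:ℝ))) - tval x xm tseq j v‖ ^ p +
                ‖tval x xm tseq j (Sum.inr (n, θ₂)) - tval x xm tseq j (Sum.inr (n, (0:ℝ)))‖ ^ p)
              (‖tval x xm tseq j (Sum.inr (n, θ₂)) - tval x xm tseq j v‖ ^ p +
                ‖tval x xm tseq j (Sum.inr (n, θ₂)) - tval x xm tseq j (Sum.inr (n, θ₂))‖ ^ p) with
              ⟨hmax, _⟩ | ⟨hmax, _⟩ <;> rw [hmax] at hconv
            · exact assemble (Sum.inr (n, 0)) (Or.inl rfl) ⟨le_refl 0, zero_le_one⟩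
                (kle_of_ext_left hinj hvext hθlt1 hKvq)
                (Or.inr ⟨rfl, hθ₂mem.1⟩) hconv
            · -- drop q
              rw [sub_self, norm_zero, Real.zero_rpow hp0, add_zero] at hconv
              obtain ⟨M', c1, c2, c3, c4⟩ := ih v hvext
                (List.isChain_cons_cons.2 ⟨kle_trans hKvq hKqh, hchainhM₂⟩) hvalidM
              refine ⟨M', c1, c2, c3, ?_⟩
              simp only [List.map_cons] at c4 ⊢
              rw [vsum_cons₂, vsum_cons₂]
              rw [vsum_cons₂] at c4
              refine le_trans ?_ c4
              have := hconv
              linarith [vsum_nonneg p (tval x xm tseq j (Sum.inr (n, θ₂)) ::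
                List.map (tval x xm tseq j) M₂), hconv]
          · have hconv := conv_max hp (xm (tseq n) - tval x xm tseq j v) (j n)
              (tval x xm tseq j h - xm (tseq n)) (-j n) (a := 0) (b := 1) ⟨hθ0, hθle1⟩
            rw [← e1, ← e2, ← e1, ← e2, ← e1, ← e2] at hconv
            have hkle1h : kle tseq (Sum.inr (n, (1:ℝ))) h := by
              rcases hKqh with hlt | ⟨heq, hle⟩
              · exact Or.inl hlt
              · cases h with
                | inl t => exact Or.inr ⟨heq, le_refl 1⟩
                | inr mθ₂ =>
                  obtain ⟨m, θ₂⟩ := mθ₂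
                  exfalso
                  have hnm : n = m := hinj heq
                  exact hsame ⟨θ₂, by rw [hnm]⟩
            have hkle0h : kle tseq (Sum.inr (n, (0:ℝ))) h := by
              rcases hKqh with hlt | ⟨heq, hle⟩
              · exact Or.inl hlt
              · exact Or.inr ⟨heq, le_trans hθ0 hle⟩
            rcases max_cases
              (‖tval x xm tseq j (Sum.inr (n, (0:ℝ))) - tval x xm tseq j v‖ ^ p +
                ‖tval x xm tseq j h - tval x xm tseq j (Sum.inr (n, (0:ℝ)))‖ ^ p)
              (‖tval x xm tseq j (Sum.inr (n, (1:ℝ))) - tval x xm tseq j v‖ ^ p +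
                ‖tval x xm tseq j h - tval x xm tseq j (Sum.inr (n, (1:ℝ)))‖ ^ p) with
              ⟨hmax, _⟩ | ⟨hmax, _⟩ <;> rw [hmax] at hconv
            · exact assemble (Sum.inr (n, 0)) (Or.inl rfl) ⟨le_refl 0, zero_le_one⟩
                (kle_of_ext_left hinj hvext hθlt1 hKvq) hkle0h hconv
            · exact assemble (Sum.inr (n, 1)) (Or.inr rfl) ⟨zero_le_one, le_refl 1⟩
                (kle_up hθle1 hKvq) hkle1h hconv


noncomputable def uf (tseq : ℕ → ℝ) (η : ℝ) : ℝ ⊕ ℕ × ℝ → ℝ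
  | .inl t => t
  | .inr (n, θ) => if θ = 1 then tseq n else tseq n - η

lemma ev_all {α : Type*} {l : Filter ℝ} (L : List α) (P : ℝ → α → Prop)
    (h : ∀ q ∈ L, ∀ᶠ η in l, P η q) : ∀ᶠ η in l, ∀ q ∈ L, P η q := by
  induction L with
  | nil => exact Filter.Eventually.of_forall (by simp)
  | cons a M ih =>
    have h1 := h a (by simp)
    have h2 := ih (fun q hq => h q (by simp [hq]))
    filter_upwards [h1, h2] with η ha hM q hq
    rcases List.mem_cons.1 hq with hh | hh
    · exact hh ▸ ha
    · exact hM q hh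

lemma ev_chain {α : Type*} {l : Filter ℝ} {R : α → α → Prop} :
    ∀ (L : List α) (u : ℝ → α → ℝ), List.Chain' R L →
    (∀ a b, R a b → a ∈ L → b ∈ L → ∀ᶠ η in l, u η a ≤ u η b) →
    ∀ᶠ η in l, List.Chain' (fun a b => u η a ≤ u η b) L := by
  intro L
  induction L with
  | nil => intro u _ _; exact Filter.Eventually.of_forall (by simp [List.Chain'])
  | cons a M ih =>
    intro u hchain hpair
    cases M with
    | nil => exact Filter.Eventually.of_forall (by simp [List.Chain'])
    | cons b M₂ =>
      have h1 := hpair a b (List.isChain_cons_cons.1 hchain).1 (by simp) (by simp)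
      have h2 := ih u (List.isChain_cons_cons.1 hchain).2
        (fun a' b' hr ha hb => hpair a' b' hr (by simp [ha]) (by simp [hb]))
      filter_upwards [h1, h2] with η hab hM
      exact List.isChain_cons_cons.2 ⟨hab, hM⟩

lemma tendsto_vsum {E : Type*} [NormedAddCommGroup E] {α : Type*} (p : ℝ) (hp : 1 ≤ p)
    {l : Filter ℝ} :
    ∀ (L : List α) (F : ℝ → α → E) (G : α → E),
    (∀ q ∈ L, Filter.Tendsto (fun η => F η q) l (nhds (G q))) →
    Filter.Tendsto (fun η => vsum p (L.map (F η))) l (nhds (vsum p (L.map G))) := by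
  intro L
  induction L with
  | nil => intro F G _; simpa using tendsto_const_nhds
  | cons a M ih =>
    intro F G h
    cases M with
    | nil => simpa using tendsto_const_nhds
    | cons b M₂ =>
      have ha := h a (by simp)
      have hb := h b (by simp)
      have hM := ih F G (fun q hq => h q (by simp [hq]))
      simp only [List.map_cons, vsum_cons₂] at hM ⊢
      have h1 : Filter.Tendsto (fun η => ‖F η b - F η a‖ ^ p) l (nhds (‖G b - G a‖ ^ p)) :=
        ((hb.sub ha).norm).rpow_const (Or.inr (by linarith))
      exact h1.add hM

lemma phase2 {E : Type*} [NormedAddCommGroup E] [NormedSpace ℝ E] {p : ℝ} (hp : 1 ≤ p)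
    (x xm : ℝ → E) {tseq : ℕ → ℝ} (j : ℕ → E) {T : ℝ}
    (htmem : ∀ n, tseq n ∈ Set.Ioc 0 T)
    (hlim : ∀ n, Filter.Tendsto x (nhdsWithin (tseq n) (Set.Iio (tseq n)))
      (nhds (xm (tseq n))))
    (hj : ∀ n, j n = x (tseq n) - xm (tseq n))
    (L : List (ℝ ⊕ ℕ × ℝ)) (hchain : List.Chain' (kle tseq) L)
    (hvalid : ∀ q ∈ L, TValid T q) (hext : ∀ q ∈ L, TExt q)
    (ε : ℝ) (hε : 0 < ε) :
    ∃ u : List ℝ, List.Chain' (· ≤ ·) u ∧ (∀ t ∈ u, t ∈ Set.Icc 0 T) ∧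
      vsum p (List.map (tval x xm tseq j) L) ≤ vsum p (List.map x u) + ε := by
  -- limit of values
  have hptval : ∀ q ∈ L, Filter.Tendsto (fun η => x (uf tseq η q)) (nhdsWithin 0 (Set.Ioi 0))
      (nhds (tval x xm tseq j q)) := by
    intro q hq
    cases q with
    | inl t => exact tendsto_const_nhds
    | inr nθ =>
      obtain ⟨n, θ⟩ := nθ
      rcases hext _ hq with h0 | h1
    -- θ = 0
      · subst h0
        have huf : ∀ η : ℝ, uf tseq η (Sum.inr (n, (0:ℝ))) = tseq n - η := by
          intro η; simp [uf]
        have hvv : tval x xm tseq j (Sum.inr (n, (0:ℝ))) = xm (tseq n) := by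
          show xm (tseq n) + (0:ℝ) • j n = xm (tseq n)
          simp
        rw [hvv]
        have htt : Filter.Tendsto (fun η : ℝ => tseq n - η) (nhdsWithin 0 (Set.Ioi 0))
            (nhdsWithin (tseq n) (Set.Iio (tseq n))) := by
          rw [tendsto_nhdsWithin_iff]
          constructor
          · have : Filter.Tendsto (fun η : ℝ => tseq n - η) (nhds 0) (nhds (tseq n - 0)) :=
              tendsto_const_nhds.sub tendsto_id
            rw [sub_zero] at this
            exact this.mono_left nhdsWithin_le_nhds
          · filter_upwards [eventually_mem_nhdsWithin] with η hη
            exact sub_lt_self _ (Set.mem_Ioi.1 hη)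
        simp only [huf]
        exact (hlim n).comp htt
      · subst h1
        have huf : ∀ η : ℝ, uf tseq η (Sum.inr (n, (1:ℝ))) = tseq n := by
          intro η; simp [uf]
        have hvv : tval x xm tseq j (Sum.inr (n, (1:ℝ))) = x (tseq n) := by
          show xm (tseq n) + (1:ℝ) • j n = x (tseq n)
          rw [one_smul, hj]; abel
        rw [hvv]
        simp only [huf]
        exact tendsto_const_nhds
  have hls : Filter.Tendsto (fun η => vsum p (L.map (fun q => x (uf tseq η q))))
      (nhdsWithin 0 (Set.Ioi 0)) (nhds (vsum p (L.map (tval x xm tseq j)))) :=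
    tendsto_vsum p hp L (fun η q => x (uf tseq η q)) (tval x xm tseq j) hptval
  have hev1 : ∀ᶠ η in nhdsWithin 0 (Set.Ioi 0),
      vsum p (L.map (tval x xm tseq j)) ≤ vsum p (L.map (fun q => x (uf tseq η q))) + ε := by
    have := hls.eventually (eventually_gt_nhds
      (show vsum p (L.map (tval x xm tseq j)) - ε < vsum p (L.map (tval x xm tseq j)) by linarith))
    filter_upwards [this] with η hη
    linarith
  have hev2 : ∀ᶠ η in nhdsWithin 0 (Set.Ioi 0),
      List.Chain' (fun a b => uf tseq η a ≤ uf tseq η b) L := by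
    apply ev_chain L (uf tseq) hchain
    intro a b hab ha hb
    cases a with
    | inl t =>
      cases b with
      | inl t' =>
        have : t ≤ t' := by
          rcases hab with h | ⟨h, _⟩
          · exact le_of_lt h
          · exact le_of_eq h
        exact Filter.Eventually.of_forall (fun η => by simpa [uf] using this)
      | inr nθ =>
        obtain ⟨n, θ⟩ := nθ
        rcases hext _ hb with h0 | h1
        · subst h0
          have htn : t < tseq n := by
            rcases hab with h | ⟨h, haux⟩
            · exact h
            · exfalso
              have : (1:ℝ) ≤ 0 := haux
              linarith
          filter_upwards [Ioo_mem_nhdsGT_of_mem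
            (Set.mem_Ico.2 ⟨le_refl (0:ℝ), show (0:ℝ) < tseq n - t by linarith⟩)] with η hη
          have : η < tseq n - t := hη.2
          simp only [uf, if_neg one_ne_zero]
          rw [if_neg (by norm_num : (0:ℝ) ≠ 1)]
          linarith
        · subst h1
          have htn : t ≤ tseq n := by
            rcases hab with h | ⟨h, _⟩
            · exact le_of_lt h
            · exact le_of_eq h
          refine Filter.Eventually.of_forall (fun η => ?_)
          simp only [uf, if_pos rfl]
          exact htn
    | inr nθ =>
      obtain ⟨n, θ⟩ := nθ
      have htn_b : tseq n ≤ ttm tseq b := by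
        rcases hab with h | ⟨h, _⟩
        · exact le_of_lt h
        · exact le_of_eq h
      rcases hext _ ha with h0 | h1
      · subst h0
        filter_upwards [eventually_mem_nhdsWithin] with η hη
        have hη0 : (0:ℝ) < η := hη
        have h1 : uf tseq η (Sum.inr (n, (0:ℝ))) = tseq n - η := by
          simp [uf]
        rw [h1]
        cases b with
        | inl t' =>
          have : tseq n ≤ t' := htn_b
          show tseq n - η ≤ t'
          linarith
        | inr mθ' =>
          obtain ⟨m, θ'⟩ := mθ'
          have hmn : tseq n ≤ tseq m := htn_b
          show tseq n - η ≤ uf tseq η (Sum.inr (m, θ'))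
          by_cases hθ' : θ' = 1
          · simp only [uf, if_pos hθ']
            linarith
          · simp only [uf, if_neg hθ']
            linarith
      · subst h1
        have h1 : ∀ η, uf tseq η (Sum.inr (n, (1:ℝ))) = tseq n := by
          intro η; simp [uf]
        cases b with
        | inl t' =>
          have : tseq n ≤ t' := htn_b
          exact Filter.Eventually.of_forall (fun η => by rw [h1]; exact this)
        | inr mθ' =>
          obtain ⟨m, θ'⟩ := mθ'
          rcases hext _ hb with hb0 | hb1
          · subst hb0
            have hlt : tseq n < tseq m := by
              rcases hab with h | ⟨h, haux⟩
              · exact h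
              · exfalso
                have : (1:ℝ) ≤ 0 := haux
                linarith
            filter_upwards [Ioo_mem_nhdsGT_of_mem
              (Set.mem_Ico.2 ⟨le_refl (0:ℝ), show (0:ℝ) < tseq m - tseq n by linarith⟩)] with η hη
            rw [h1]
            simp only [uf, if_neg (by norm_num : (0:ℝ) ≠ 1)]
            have : η < tseq m - tseq n := hη.2
            linarith
          · subst hb1
            have : tseq n ≤ tseq m := htn_b
            refine Filter.Eventually.of_forall (fun η => ?_)
            rw [h1]
            simp only [uf, if_pos rfl]
            exact this
  have hev3 : ∀ᶠ η in nhdsWithin 0 (Set.Ioi 0),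
      ∀ q ∈ L, uf tseq η q ∈ Set.Icc 0 T := by
    apply ev_all
    intro q hq
    cases q with
    | inl t =>
      exact Filter.Eventually.of_forall (fun η => by
        simpa [uf] using (show t ∈ Set.Icc 0 T from hvalid _ hq))
    | inr nθ =>
      obtain ⟨n, θ⟩ := nθ
      by_cases hθ' : θ = 1
      · subst hθ'
        refine Filter.Eventually.of_forall (fun η => ?_)
        simp only [uf, if_pos rfl]
        exact ⟨le_of_lt (htmem n).1, (htmem n).2⟩
      · filter_upwards [Ioo_mem_nhdsGT_of_mem
          (Set.mem_Ico.2 ⟨le_refl (0:ℝ), (htmem n).1⟩)] with η hη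
        simp only [uf, if_neg hθ']
        constructor
        · have : η < tseq n := hη.2
          linarith
        · have : (0:ℝ) < η := hη.1
          have h2 := (htmem n).2
          linarith
  obtain ⟨η, hη1, hη2, hη3⟩ := (hev1.and (hev2.and hev3)).exists
  refine ⟨L.map (uf tseq η), ?_, ?_, ?_⟩
  · exact (List.isChain_map (uf tseq η)).2 hη2
  · intro t ht
    obtain ⟨q, hq, rfl⟩ := List.mem_map.1 ht
    exact hη3 q hq
  · rw [List.map_map]
    exact hη1


section TauLemmas
variable {tseq : ℕ → ℝ} {a : ℕ → ℝ}

lemma ite_nonneg' {c : Prop} [Decidable c] {v : ℝ} (hv : 0 ≤ v) : 0 ≤ if c then v else 0 := by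
  by_cases h : c <;> simp [h, hv]

lemma gsummable (ha : ∀ n, 0 ≤ a n) (hsa : Summable a) (t : ℝ) :
    Summable (fun n => if tseq n ≤ t then a n else 0) := by
  apply Summable.of_nonneg_of_le (fun n => ite_nonneg' (ha n)) (fun n => ?_) hsa
  by_cases h : tseq n ≤ t <;> simp [h, ha n]

lemma gmono (ha : ∀ n, 0 ≤ a n) (hsa : Summable a) {t t' : ℝ} (h : t ≤ t') :
    (∑' n, if tseq n ≤ t then a n else 0) ≤ ∑' n, if tseq n ≤ t' then a n else 0 := by
  apply Summable.tsum_le_tsum _ (gsummable ha hsa t) (gsummable ha hsa t')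
  intro n
  by_cases hn : tseq n ≤ t
  · rw [if_pos hn, if_pos (le_trans hn h)]
  · rw [if_neg hn]
    by_cases hn' : tseq n ≤ t' <;> simp [hn', ha n]

lemma gzero (h : ∀ n, ¬ tseq n ≤ t) :
    (∑' n, if tseq n ≤ t then a n else 0) = 0 := by
  have : ∀ n, (if tseq n ≤ t then a n else 0) = 0 := fun n => if_neg (h n)
  simp [this]

lemma gjump (ha : ∀ n, 0 ≤ a n) (hsa : Summable a) {t : ℝ} {n : ℕ} (h : t < tseq n) :
    (∑' m, if tseq m ≤ t then a m else 0) + a n ≤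
      ∑' m, if tseq m ≤ tseq n then a m else 0 := by
  have hs1 := gsummable (tseq := tseq) ha hsa t
  have hs2 : Summable (fun m => if m = n then a n else 0) := (hasSum_ite_eq n (a n)).summable
  rw [← (tsum_ite_eq n (fun _ => a n) : (∑' m, if m = n then a n else 0) = a n), ← Summable.tsum_add hs1 hs2]
  apply Summable.tsum_le_tsum _ (hs1.add hs2) (gsummable ha hsa (tseq n))
  intro m
  by_cases hm : m = n
  · subst hm
    rw [if_neg (not_le.2 h), if_pos rfl, if_pos (le_refl _), zero_add]
  · rw [if_neg hm, add_zero]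
    by_cases hm' : tseq m ≤ t
    · rw [if_pos hm', if_pos (le_trans hm' (le_of_lt h))]
    · rw [if_neg hm']
      by_cases h2 : tseq m ≤ tseq n <;> simp [h2, ha m]

lemma gtail (ha : ∀ n, 0 ≤ a n) (hsa : Summable a) {ε : ℝ} (hε : 0 < ε) :
    ∃ N : ℕ, (∑' n, if N ≤ n then a n else 0) ≤ ε := by
  have htend := hsa.hasSum.tendsto_sum_nat
  have : ∀ᶠ N in Filter.atTop, (∑' n, a n) - ε < ∑ i ∈ Finset.range N, a i :=
    htend.eventually (eventually_gt_nhds (by linarith))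
  obtain ⟨N, hN⟩ := this.exists
  refine ⟨N, ?_⟩
  have hsum_split : (∑' n, (if n < N then a n else 0)) = ∑ i ∈ Finset.range N, a i := by
    rw [tsum_eq_sum (s := Finset.range N) (fun b hb => if_neg (by simpa using hb))]
    exact Finset.sum_congr rfl (fun i hi => if_pos (Finset.mem_range.1 hi))
  have hs1 : Summable (fun n => if n < N then a n else 0) := by
    apply Summable.of_nonneg_of_le (fun n => ite_nonneg' (ha n)) (fun n => ?_) hsa
    by_cases h : n < N <;> simp [h, ha n]
  have hs2 : Summable (fun n => if N ≤ n then a n else 0) := by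
    apply Summable.of_nonneg_of_le (fun n => ite_nonneg' (ha n)) (fun n => ?_) hsa
    by_cases h : N ≤ n <;> simp [h, ha n]
  have hsplit : (∑' n, (if n < N then a n else 0)) + (∑' n, if N ≤ n then a n else 0)
      = ∑' n, a n := by
    rw [← Summable.tsum_add hs1 hs2]
    apply tsum_congr
    intro n
    by_cases h : n < N
    · rw [if_pos h, if_neg (by omega), add_zero]
    · rw [if_neg h, if_pos (by omega), zero_add]
  have := hsum_split ▸ hsplit
  linarith

lemma gright (ha : ∀ n, 0 ≤ a n) (hsa : Summable a) (t₀ : ℝ) {ε : ℝ} (hε : 0 < ε) :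
    ∃ η > 0, ∀ t, t₀ < t → t < t₀ + η →
      (∑' n, if tseq n ≤ t then a n else 0) ≤ (∑' n, if tseq n ≤ t₀ then a n else 0) + ε := by
  obtain ⟨N, hN⟩ := gtail ha hsa hε
  set F : Finset ℕ := (Finset.range N).filter (fun i => t₀ < tseq i) with hF
  by_cases hFne : F.Nonempty
  · set η := (F.image (fun i => tseq i - t₀)).min' (hFne.image _) with hη
    have hηpos : 0 < η := by
      have := (F.image (fun i => tseq i - t₀)).min'_mem (hFne.image _)
      rw [← hη] at this
      obtain ⟨i, hi, hie⟩ := Finset.mem_image.1 this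
      have : t₀ < tseq i := (Finset.mem_filter.1 hi).2
      rw [← hie]; linarith
    refine ⟨η, hηpos, fun t ht1 ht2 => ?_⟩
    have hterm : ∀ n, (if tseq n ≤ t then a n else 0) ≤
        (if tseq n ≤ t₀ then a n else 0) + (if N ≤ n then a n else 0) := by
      intro n
      by_cases h1 : tseq n ≤ t
      · rw [if_pos h1]
        by_cases h2 : tseq n ≤ t₀
        · rw [if_pos h2]
          have : (0:ℝ) ≤ if N ≤ n then a n else 0 := ite_nonneg' (ha n)
          linarith
        · rw [if_neg h2]
          push_neg at h2
          have hnN : N ≤ n := by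
            by_contra hc
            push_neg at hc
            have hmemF : n ∈ F := Finset.mem_filter.2 ⟨Finset.mem_range.2 hc, h2⟩
            have : η ≤ tseq n - t₀ :=
              Finset.min'_le _ _ (Finset.mem_image.2 ⟨n, hmemF, rfl⟩)
            linarith
          rw [if_pos hnN, zero_add]
      · rw [if_neg h1]
        exact add_nonneg (ite_nonneg' (ha n)) (ite_nonneg' (ha n))
    calc (∑' n, if tseq n ≤ t then a n else 0)
        ≤ ∑' n, ((if tseq n ≤ t₀ then a n else 0) + (if N ≤ n then a n else 0)) := by
          apply Summable.tsum_le_tsum hterm (gsummable ha hsa t)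
          apply Summable.add (gsummable ha hsa t₀)
          apply Summable.of_nonneg_of_le (fun n => ite_nonneg' (ha n)) (fun n => ?_) hsa
          by_cases h : N ≤ n <;> simp [h, ha n]
      _ = (∑' n, if tseq n ≤ t₀ then a n else 0) + (∑' n, if N ≤ n then a n else 0) := by
          apply Summable.tsum_add (gsummable ha hsa t₀)
          apply Summable.of_nonneg_of_le (fun n => ite_nonneg' (ha n)) (fun n => ?_) hsa
          by_cases h : N ≤ n <;> simp [h, ha n]
      _ ≤ _ := by linarith
  · refine ⟨1, one_pos, fun t ht1 ht2 => ?_⟩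
    have hterm : ∀ n, (if tseq n ≤ t then a n else 0) ≤
        (if tseq n ≤ t₀ then a n else 0) + (if N ≤ n then a n else 0) := by
      intro n
      by_cases h1 : tseq n ≤ t
      · rw [if_pos h1]
        by_cases h2 : tseq n ≤ t₀
        · rw [if_pos h2]
          have : (0:ℝ) ≤ if N ≤ n then a n else 0 := ite_nonneg' (ha n)
          linarith
        · rw [if_neg h2]
          push_neg at h2
          have hnN : N ≤ n := by
            by_contra hc
            push_neg at hc
            exact hFne ⟨n, Finset.mem_filter.2 ⟨Finset.mem_range.2 hc, h2⟩⟩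
          rw [if_pos hnN, zero_add]
      · rw [if_neg h1]
        exact add_nonneg (ite_nonneg' (ha n)) (ite_nonneg' (ha n))
    calc (∑' n, if tseq n ≤ t then a n else 0)
        ≤ ∑' n, ((if tseq n ≤ t₀ then a n else 0) + (if N ≤ n then a n else 0)) := by
          apply Summable.tsum_le_tsum hterm (gsummable ha hsa t)
          apply Summable.add (gsummable ha hsa t₀)
          apply Summable.of_nonneg_of_le (fun n => ite_nonneg' (ha n)) (fun n => ?_) hsa
          by_cases h : N ≤ n <;> simp [h, ha n]
      _ = (∑' n, if tseq n ≤ t₀ then a n else 0) + (∑' n, if N ≤ n then a n else 0) := by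
          apply Summable.tsum_add (gsummable ha hsa t₀)
          apply Summable.of_nonneg_of_le (fun n => ite_nonneg' (ha n)) (fun n => ?_) hsa
          by_cases h : N ≤ n <;> simp [h, ha n]
      _ ≤ _ := by linarith

lemma gleft (ha : ∀ n, 0 ≤ a n) (hsa : Summable a) (t₀ c : ℝ) (hc : c < t₀) {ε : ℝ}
    (hε : 0 < ε) :
    ∃ t, c ≤ t ∧ t < t₀ ∧
      (∑' n, if tseq n ≤ t₀ then a n else 0) ≤
        (∑' n, if tseq n ≤ t then a n else 0) +
        (∑' n, if tseq n = t₀ then a n else 0) + ε := by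
  obtain ⟨N, hN⟩ := gtail ha hsa hε
  set F : Finset ℕ := (Finset.range N).filter (fun i => tseq i < t₀) with hF
  set S : Finset ℝ := insert c (F.image tseq) with hS
  have hSne : S.Nonempty := ⟨c, Finset.mem_insert_self _ _⟩
  set t : ℝ := S.max' hSne with htdef
  have hct : c ≤ t := Finset.le_max' _ _ (Finset.mem_insert_self _ _)
  have htlt : t < t₀ := by
    rw [htdef]
    rw [Finset.max'_lt_iff]
    intro y hy
    rcases Finset.mem_insert.1 hy with h | h
    · exact h ▸ hc
    · obtain ⟨i, hi, rfl⟩ := Finset.mem_image.1 h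
      exact (Finset.mem_filter.1 hi).2
  refine ⟨t, hct, htlt, ?_⟩
  have hsmid : Summable (fun n => if tseq n = t₀ then a n else 0) := by
    apply Summable.of_nonneg_of_le (fun n => ite_nonneg' (ha n)) (fun n => ?_) hsa
    by_cases h : tseq n = t₀ <;> simp [h, ha n]
  have hstail : Summable (fun n => if N ≤ n then a n else 0) := by
    apply Summable.of_nonneg_of_le (fun n => ite_nonneg' (ha n)) (fun n => ?_) hsa
    by_cases h : N ≤ n <;> simp [h, ha n]
  have hterm : ∀ n, (if tseq n ≤ t₀ then a n else 0) ≤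
      ((if tseq n ≤ t then a n else 0) + (if tseq n = t₀ then a n else 0)) +
      (if N ≤ n then a n else 0) := by
    intro n
    by_cases h1 : tseq n ≤ t₀
    · rw [if_pos h1]
      rcases lt_or_eq_of_le h1 with hlt | heq
      · rw [if_neg (show ¬ tseq n = t₀ from fun h => absurd h (ne_of_lt hlt))]
        by_cases h3 : n < N
        · have hmemF : n ∈ F := Finset.mem_filter.2 ⟨Finset.mem_range.2 h3, hlt⟩
          have : tseq n ≤ t :=
            Finset.le_max' _ _ (Finset.mem_insert.2 (Or.inr (Finset.mem_image.2 ⟨n, hmemF, rfl⟩)))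
          rw [if_pos this]
          have : (0:ℝ) ≤ if N ≤ n then a n else 0 := ite_nonneg' (ha n)
          linarith
        · rw [if_pos (show N ≤ n by omega)]
          have : (0:ℝ) ≤ if tseq n ≤ t then a n else 0 := ite_nonneg' (ha n)
          linarith
      · rw [if_pos heq]
        have h4 : (0:ℝ) ≤ if tseq n ≤ t then a n else 0 := ite_nonneg' (ha n)
        have h5 : (0:ℝ) ≤ if N ≤ n then a n else 0 := ite_nonneg' (ha n)
        linarith
    · rw [if_neg h1]
      exact add_nonneg (add_nonneg (ite_nonneg' (ha n)) (ite_nonneg' (ha n))) (ite_nonneg' (ha n))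
  calc (∑' n, if tseq n ≤ t₀ then a n else 0)
      ≤ ∑' n, (((if tseq n ≤ t then a n else 0) + (if tseq n = t₀ then a n else 0)) +
          (if N ≤ n then a n else 0)) := by
        apply Summable.tsum_le_tsum hterm (gsummable ha hsa t₀)
        exact ((gsummable ha hsa t).add hsmid).add hstail
    _ = ((∑' n, if tseq n ≤ t then a n else 0) + (∑' n, if tseq n = t₀ then a n else 0)) +
          (∑' n, if N ≤ n then a n else 0) := by
        rw [Summable.tsum_add ((gsummable ha hsa t).add hsmid) hstail,
          Summable.tsum_add (gsummable ha hsa t) hsmid]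
    _ ≤ _ := by linarith

end TauLemmas

end VarAux

/-- inserting fictitious time to traverse the jumps of a càdlàg path `x` of
finite `p`-variation linearly does not change the `p`-variation:
`‖x^δ‖_{p,[0,τ^δ(T)]} = ‖x‖_{p,[0,T]}`.

Here `tseq` enumerates (injectively) a set of times in `(0,T]` containing all
discontinuities of `x`, `xm t` is the left limit of `x` at `t`, `j n = x(t_n) − x(t_n⁻)`
is the jump at `t_n`, `τ = τ^δ` is the time change
`τ(t) = t + δ Σ_n ‖j n‖^p 1_{t_n ≤ t}`, and `xδ = x^δ` is the continuous path that
equals `x ∘ τ⁻¹` outside the inserted intervals and traverses each jump linearly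
during the inserted interval `[τ(t_n) − δ‖j n‖^p, τ(t_n))`. -/
theorem stmt_1 {d : ℕ} (p T δ : ℝ) (hp : 1 ≤ p) (hT : 0 < T) (hδ : 0 < δ)
    (x xm : ℝ → EuclideanSpace ℝ (Fin d))
    (hright : ∀ t ∈ Set.Ico 0 T, ContinuousWithinAt x (Set.Ici t) t)
    (hleft : ∀ t ∈ Set.Ioc 0 T, Tendsto x (nhdsWithin t (Set.Iio t)) (nhds (xm t)))
    (hfin : BddAbove (pVarSums p 0 T x))
    (tseq : ℕ → ℝ) (hinj : Function.Injective tseq)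
    (htmem : ∀ n, tseq n ∈ Set.Ioc 0 T)
    (hdisc : ∀ t ∈ Set.Ioc 0 T, x t ≠ xm t → ∃ n, tseq n = t)
    (j : ℕ → EuclideanSpace ℝ (Fin d)) (hj : ∀ n, j n = x (tseq n) - xm (tseq n))
    (hsum : Summable fun n => ‖j n‖ ^ p)
    (τ : ℝ → ℝ)
    (hτ : ∀ t, τ t = t + δ * ∑' n, if tseq n ≤ t then ‖j n‖ ^ p else 0)
    (xδ : ℝ → EuclideanSpace ℝ (Fin d))
    (hxδcont : ContinuousOn xδ (Set.Icc 0 (τ T)))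
    (hxδmatch : ∀ t ∈ Set.Icc 0 T, xδ (τ t) = x t)
    (hxδseg : ∀ n, ∀ s ∈ Set.Ico (τ (tseq n) - δ * ‖j n‖ ^ p) (τ (tseq n)),
      xδ s = xm (tseq n) +
        ((s - (τ (tseq n) - δ * ‖j n‖ ^ p)) / (δ * ‖j n‖ ^ p)) • j n) :
    sSup (pVarSums p 0 (τ T) xδ) ^ (1 / p) = sSup (pVarSums p 0 T x) ^ (1 / p) := by
  classical
  have ha : ∀ n, 0 ≤ ‖j n‖ ^ p := fun n => Real.rpow_nonneg (norm_nonneg _) _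
  -- basic τ facts
  have hτmono : ∀ {t t' : ℝ}, t ≤ t' → τ t ≤ τ t' := by
    intro t t' h
    rw [hτ t, hτ t']
    have h1 := gmono (tseq := tseq) ha hsum h
    have h2 := mul_le_mul_of_nonneg_left h1 hδ.le
    linarith
  have hτstrict : ∀ {t t' : ℝ}, t < t' → τ t < τ t' := by
    intro t t' h
    rw [hτ t, hτ t']
    have h1 := gmono (tseq := tseq) ha hsum h.le
    have h2 := mul_le_mul_of_nonneg_left h1 hδ.le
    linarith
  have hτlt_inv : ∀ {t t' : ℝ}, τ t < τ t' → t < t' := by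
    intro t t' h
    by_contra hc
    push_neg at hc
    exact absurd (hτmono hc) (not_le.2 h)
  have hτle_inv : ∀ {t t' : ℝ}, τ t ≤ τ t' → t ≤ t' := by
    intro t t' h
    by_contra hc
    push_neg at hc
    exact absurd (hτstrict hc) (not_lt.2 h)
  have hτ0 : τ 0 = 0 := by
    rw [hτ]
    rw [gzero (fun n => not_le.2 (htmem n).1)]
    ring
  have hτjump : ∀ {n : ℕ} {t : ℝ}, t < tseq n →
      τ t + δ * ‖j n‖ ^ p + (tseq n - t) ≤ τ (tseq n) := by
    intro n t h
    rw [hτ t, hτ (tseq n)]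
    have h1 := gjump (tseq := tseq) ha hsum h
    have h2 := mul_le_mul_of_nonneg_left h1 hδ.le
    rw [mul_add] at h2
    linarith
  have hτTpos : (0:ℝ) ≤ τ T := by
    have := hτmono hT.le
    rw [hτ0] at this
    exact this
  -- classification of points of [0, τ T]
  have hclass : ∀ s ∈ Set.Icc 0 (τ T), (∃ t ∈ Set.Icc 0 T, τ t = s) ∨
      (∃ n, 0 < δ * ‖j n‖ ^ p ∧ τ (tseq n) - δ * ‖j n‖ ^ p ≤ s ∧ s < τ (tseq n)) := by
    intro s hs
    set A : Set ℝ := {t | t ∈ Set.Icc 0 T ∧ s ≤ τ t} with hA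
    have hTA : T ∈ A := ⟨⟨hT.le, le_refl T⟩, hs.2⟩
    have hAne : A.Nonempty := ⟨T, hTA⟩
    have hAbdd : BddBelow A := ⟨0, fun t ht => ht.1.1⟩
    set c : ℝ := sInf A with hc
    have hc0 : 0 ≤ c := le_csInf hAne (fun t ht => ht.1.1)
    have hcT : c ≤ T := csInf_le hAbdd hTA
    have hclaim1 : s ≤ τ c := by
      apply le_of_forall_pos_le_add
      intro ε hε
      obtain ⟨η, hη, hηprop⟩ := gright (tseq := tseq) ha hsum c
        (ε := ε / (2 * δ)) (by positivity)
      obtain ⟨t, htA, htlt⟩ := Real.lt_sInf_add_pos hAne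
        (show 0 < min η (ε/2) by positivity)
      rcases le_or_gt t c with h | h
      · have hct : c ≤ t := csInf_le hAbdd htA
        have hteq : t = c := le_antisymm h hct
        have := htA.2
        rw [hteq] at this
        linarith
      · have h1 : t < c + η :=
          lt_of_lt_of_le htlt (add_le_add_right (min_le_left _ _) _)
        have h2 := hηprop t h h1
        have h3 : t < c + ε/2 :=
          lt_of_lt_of_le htlt (add_le_add_right (min_le_right _ _) _)
        have h4 : s ≤ τ t := htA.2
        rw [hτ t] at h4
        rw [hτ c]
        have h5 := mul_le_mul_of_nonneg_left h2 hδ.le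
        rw [mul_add] at h5
        have h6 : δ * (ε / (2*δ)) = ε/2 := by
          field_simp
        linarith
    rcases eq_or_lt_of_le hclaim1 with heq | hlt
    · exact Or.inl ⟨c, ⟨hc0, hcT⟩, heq.symm⟩
    · have hcpos : 0 < c := by
        rcases lt_or_eq_of_le hc0 with h | h
        · exact h
        · exfalso
          rw [← h, hτ0] at hlt
          linarith [hs.1]
      have hbelow : ∀ t, 0 ≤ t → t < c → τ t < s := by
        intro t h0 hc'
        by_contra hcon
        push_neg at hcon
        have : t ∈ A := ⟨⟨h0, le_trans hc'.le hcT⟩, hcon⟩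
        exact absurd (csInf_le hAbdd this) (not_le.2 hc')
      have hmid : τ c - δ * (∑' n, if tseq n = c then ‖j n‖ ^ p else 0) ≤ s := by
        apply le_of_forall_pos_le_add
        intro ε hε
        obtain ⟨t, hct, htc, hest⟩ := gleft (tseq := tseq) ha hsum c (max 0 (c - ε/2))
          (max_lt hcpos (by linarith)) (ε := ε/(2*δ)) (by positivity)
        have ht0 : 0 ≤ t := le_trans (le_max_left _ _) hct
        have hτt : τ t < s := hbelow t ht0 htc
        have h5 := mul_le_mul_of_nonneg_left hest hδ.le
        rw [mul_add, mul_add] at h5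
        have h6 : δ * (ε/(2*δ)) = ε/2 := by
          field_simp
        have h7 : c - t ≤ ε/2 := by
          have h8 : c - ε/2 ≤ t := le_trans (le_max_right _ _) hct
          linarith
        rw [hτ c]
        rw [hτ t] at hτt
        linarith
      have hjpos : 0 < ∑' n, if tseq n = c then ‖j n‖ ^ p else 0 := by
        by_contra hcon
        push_neg at hcon
        have := mul_nonpos_of_nonneg_of_nonpos hδ.le hcon
        linarith
      have hex : ∃ n, tseq n = c := by
        by_contra hcon
        push_neg at hcon
        have hz : (∑' n, if tseq n = c then ‖j n‖ ^ p else 0) = 0 := by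
          have : ∀ n, (if tseq n = c then ‖j n‖ ^ p else 0) = 0 := fun n => if_neg (hcon n)
          simp [this]
        rw [hz] at hjpos
        exact lt_irrefl 0 hjpos
      obtain ⟨n, hn⟩ := hex
      have hsingle : (∑' m, if tseq m = c then ‖j m‖ ^ p else 0) = ‖j n‖ ^ p := by
        rw [tsum_eq_single n]
        · rw [if_pos hn]
        · intro m hm
          apply if_neg
          intro hmc
          exact hm (hinj (by rw [hmc, hn]))
      rw [hsingle] at hmid hjpos
      refine Or.inr ⟨n, mul_pos hδ hjpos, ?_, ?_⟩
      · rw [hn]; exact hmid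
      · rw [hn]; exact hlt
  -- the tagging function
  set Tg : ℝ → ℝ ⊕ ℕ × ℝ := fun s =>
    if h : ∃ t ∈ Set.Icc 0 T, τ t = s then Sum.inl h.choose
    else if h2 : ∃ n, 0 < δ * ‖j n‖ ^ p ∧ τ (tseq n) - δ * ‖j n‖ ^ p ≤ s ∧ s < τ (tseq n) then
      Sum.inr (h2.choose,
        (s - (τ (tseq h2.choose) - δ * ‖j h2.choose‖ ^ p)) / (δ * ‖j h2.choose‖ ^ p))
    else Sum.inl 0 with hTg
  have hTgspec : ∀ s ∈ Set.Icc 0 (τ T),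
      (tval x xm tseq j (Tg s) = xδ s) ∧ TValid T (Tg s) ∧
      ((∃ t, Tg s = Sum.inl t ∧ t ∈ Set.Icc 0 T ∧ τ t = s) ∨
       (∃ n θ, Tg s = Sum.inr (n, θ) ∧ 0 < δ * ‖j n‖ ^ p ∧
         τ (tseq n) - δ * ‖j n‖ ^ p ≤ s ∧ s < τ (tseq n) ∧ 0 ≤ θ ∧ θ < 1 ∧
         θ = (s - (τ (tseq n) - δ * ‖j n‖ ^ p)) / (δ * ‖j n‖ ^ p))) := by
    intro s hs
    by_cases h : ∃ t ∈ Set.Icc 0 T, τ t = s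
    · have hTgs : Tg s = Sum.inl h.choose := by
        simp only [hTg]
        rw [dif_pos h]
      obtain ⟨hmem, hτt⟩ := h.choose_spec
      refine ⟨?_, ?_, Or.inl ⟨h.choose, hTgs, hmem, hτt⟩⟩
      · rw [hTgs]
        show x h.choose = xδ s
        rw [← hxδmatch _ hmem, hτt]
      · rw [hTgs]
        exact hmem
    · have h2 : ∃ n, 0 < δ * ‖j n‖ ^ p ∧ τ (tseq n) - δ * ‖j n‖ ^ p ≤ s ∧ s < τ (tseq n) := by
        rcases hclass s hs with hcl | hcl
        · exact absurd hcl h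
        · exact hcl
      have hTgs : Tg s = Sum.inr (h2.choose,
          (s - (τ (tseq h2.choose) - δ * ‖j h2.choose‖ ^ p)) / (δ * ‖j h2.choose‖ ^ p)) := by
        simp only [hTg]
        rw [dif_neg h, dif_pos h2]
      obtain ⟨hpos, hb1, hb2⟩ := h2.choose_spec
      have hθ0 : 0 ≤ (s - (τ (tseq h2.choose) - δ * ‖j h2.choose‖ ^ p)) /
          (δ * ‖j h2.choose‖ ^ p) := div_nonneg (by linarith) hpos.le
      have hθ1 : (s - (τ (tseq h2.choose) - δ * ‖j h2.choose‖ ^ p)) /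
          (δ * ‖j h2.choose‖ ^ p) < 1 := (div_lt_one hpos).2 (by linarith)
      refine ⟨?_, ?_, Or.inr ⟨h2.choose, _, hTgs, hpos, hb1, hb2, hθ0, hθ1, rfl⟩⟩
      · rw [hTgs]
        show xm (tseq h2.choose) + _ • j h2.choose = xδ s
        exact (hxδseg h2.choose s ⟨hb1, hb2⟩).symm
      · rw [hTgs]
        exact ⟨hθ0, hθ1.le⟩
  have hTgkle : ∀ s₁ s₂, s₁ ∈ Set.Icc 0 (τ T) → s₂ ∈ Set.Icc 0 (τ T) → s₁ ≤ s₂ →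
      kle tseq (Tg s₁) (Tg s₂) := by
    intro s₁ s₂ h1 h2 h12
    rcases (hTgspec s₁ h1).2.2 with ⟨t₁, he1, hm1, hτ1⟩ |
      ⟨n₁, θ₁, he1, hpos1, hb11, hb12, hθ10, hθ11, hθd1⟩ <;>
      rcases (hTgspec s₂ h2).2.2 with ⟨t₂, he2, hm2, hτ2⟩ |
        ⟨n₂, θ₂, he2, hpos2, hb21, hb22, hθ20, hθ21, hθd2⟩
    · rw [he1, he2]
      have : t₁ ≤ t₂ := hτle_inv (by rw [hτ1, hτ2]; exact h12)
      rcases lt_or_eq_of_le this with h | h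
      · exact Or.inl h
      · exact Or.inr ⟨h, le_refl 1⟩
    · rw [he1, he2]
      have : t₁ < tseq n₂ := hτlt_inv (by rw [hτ1]; exact lt_of_le_of_lt h12 hb22)
      exact Or.inl this
    · rw [he1, he2]
      have hle : tseq n₁ ≤ t₂ := by
        by_contra hcon
        push_neg at hcon
        have hj1 := hτjump hcon
        rw [hτ2] at hj1
        linarith
      rcases lt_or_eq_of_le hle with h | h
      · exact Or.inl h
      · exact Or.inr ⟨h, hθ11.le⟩
    · rw [he1, he2]
      by_cases hnn : n₁ = n₂
      · subst hnn
        refine Or.inr ⟨rfl, ?_⟩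
        show θ₁ ≤ θ₂
        rw [hθd1, hθd2]
        exact (div_le_div_iff_of_pos_right hpos1).2 (by linarith)
      · have hlt12 : tseq n₁ < tseq n₂ := by
          rcases lt_trichotomy (tseq n₁) (tseq n₂) with h | h | h
          · exact h
          · exact absurd (hinj h) hnn
          · exfalso
            have hj1 := hτjump h
            linarith
        exact Or.inl hlt12
  have hTgext0 : TExt (Tg 0) := by
    have h : ∃ t ∈ Set.Icc 0 T, τ t = 0 := ⟨0, ⟨le_refl 0, hT.le⟩, hτ0⟩
    have : Tg 0 = Sum.inl h.choose := by
      simp only [hTg]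
      rw [dif_pos h]
    rw [this]
    trivial
  -- inclusion of partition sums
  have hsub : pVarSums p 0 T x ⊆ pVarSums p 0 (τ T) xδ := by
    rintro S ⟨m, t, hmono, h0, hlastt, rfl⟩
    have hmem : ∀ k : Fin (m+1), t k ∈ Set.Icc 0 T := fun k =>
      ⟨by rw [← h0]; exact hmono (Fin.zero_le k), by rw [← hlastt]; exact hmono (Fin.le_last k)⟩
    refine ⟨m, fun i => τ (t i), fun i j hij => hτmono (hmono hij),
      by show τ (t 0) = 0; rw [h0, hτ0], by show τ (t (Fin.last m)) = τ T; rw [hlastt], ?_⟩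
    apply Finset.sum_congr rfl
    intro i _
    rw [hxδmatch _ (hmem _), hxδmatch _ (hmem _)]
  -- the key bound
  have hkey : ∀ S ∈ pVarSums p 0 (τ T) xδ, S ≤ sSup (pVarSums p 0 T x) := by
    rintro S ⟨m, s, hsmono, hs0, hslast, rfl⟩
    have hsmem : ∀ i, s i ∈ Set.Icc 0 (τ T) := fun i =>
      ⟨by rw [← hs0]; exact hsmono (Fin.zero_le i),
       by rw [← hslast]; exact hsmono (Fin.le_last i)⟩
    apply le_of_forall_pos_le_add
    intro ε hε
    set L₀ : List (ℝ ⊕ ℕ × ℝ) := List.ofFn (fun i : Fin m => Tg (s i.succ)) with hL₀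
    have hLeq : Tg (s 0) :: L₀ = List.ofFn (fun i : Fin (m+1) => Tg (s i)) := by
      rw [hL₀]
      exact (List.ofFn_succ (f := fun i : Fin (m+1) => Tg (s i))).symm
    have hchainL : List.Chain' (kle tseq) (Tg (s 0) :: L₀) := by
      rw [hLeq]
      unfold List.Chain'
      rw [List.isChain_iff_getElem]
      intro i hi
      rw [List.getElem_ofFn, List.getElem_ofFn]
      apply hTgkle _ _ (hsmem _) (hsmem _)
      apply hsmono
      exact Nat.le_succ i
    have hvalidL : ∀ q ∈ L₀, TValid T q := by
      intro q hq
      rw [hL₀] at hq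
      obtain ⟨i, hi⟩ := List.mem_ofFn.1 hq
      rw [← hi]
      exact (hTgspec _ (hsmem _)).2.1
    have hext0 : TExt (Tg (s 0)) := by
      rw [hs0]
      exact hTgext0
    obtain ⟨L', hc1, hc2, hc3, hc4⟩ :=
      phase1 hp x xm hinj j T L₀ (Tg (s 0)) hext0 hchainL hvalidL
    have hext' : ∀ q ∈ Tg (s 0) :: L', TExt q := by
      intro q hq
      rcases List.mem_cons.1 hq with h | h
      · exact h ▸ hext0
      · exact hc3 q h
    have hvalid' : ∀ q ∈ Tg (s 0) :: L', TValid T q := by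
      intro q hq
      rcases List.mem_cons.1 hq with h | h
      · exact h ▸ (hTgspec _ (hsmem 0)).2.1
      · exact hc2 q h
    obtain ⟨u, hu1, hu2, hu3⟩ := phase2 hp x xm j htmem
      (fun n => hleft (tseq n) (htmem n)) hj
      (Tg (s 0) :: L') hc1 hvalid' hext' ε hε
    have hSval : (∑ i : Fin m, ‖xδ (s i.succ) - xδ (s i.castSucc)‖ ^ p) =
        vsum p (List.map (tval x xm tseq j) (Tg (s 0) :: L₀)) := by
      rw [hLeq, List.map_ofFn, vsum_ofFn]
      apply Finset.sum_congr rfl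
      intro i _
      simp only [Function.comp]
      rw [(hTgspec _ (hsmem i.succ)).1, (hTgspec _ (hsmem i.castSucc)).1]
    set u' : List ℝ := (0 :: u) ++ [T] with hu'
    have hchainu' : List.Chain' (· ≤ ·) u' := by
      apply List.IsChain.append
      · cases u with
        | nil => simp
        | cons b u₁ => exact List.isChain_cons_cons.2 ⟨(hu2 b (by simp)).1, hu1⟩
      · exact List.isChain_singleton T
      · intro y hy z hz
        simp only [List.head?_cons, Option.mem_def, Option.some.injEq] at hz
        subst hz
        have hymem : y ∈ (0 :: u) := List.mem_of_mem_getLast? hy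
        rcases List.mem_cons.1 hymem with h | h
        · rw [h]; exact hT.le
        · exact (hu2 y h).2
    have hhead : u'.head? = some 0 := by rw [hu']; rfl
    have hlast' : u'.getLast? = some T := by rw [hu']; exact List.getLast?_concat
    have hmemX := list_mem_pVarSums p 0 T x u' hchainu' hhead hlast'
    have hbound1 : vsum p (u.map x) ≤ vsum p (u'.map x) := by
      have e : u'.map x = (x 0 :: u.map x) ++ [x T] := by
        rw [hu']
        simp
      rw [e]
      calc vsum p (u.map x) ≤ vsum p (x 0 :: u.map x) := vsum_le_cons p _ _
        _ ≤ vsum p ((x 0 :: u.map x) ++ [x T]) := vsum_le_concat p _ _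
    have hsup : vsum p (u'.map x) ≤ sSup (pVarSums p 0 T x) := le_csSup hfin hmemX
    calc (∑ i : Fin m, ‖xδ (s i.succ) - xδ (s i.castSucc)‖ ^ p)
        = vsum p (List.map (tval x xm tseq j) (Tg (s 0) :: L₀)) := hSval
      _ ≤ vsum p (List.map (tval x xm tseq j) (Tg (s 0) :: L')) := hc4
      _ ≤ vsum p (u.map x) + ε := hu3
      _ ≤ vsum p (u'.map x) + ε := add_le_add_left hbound1 _
      _ ≤ sSup (pVarSums p 0 T x) + ε := add_le_add_left hsup _
  -- conclusion
  have hne : (pVarSums p 0 T x).Nonempty :=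
    ⟨_, list_mem_pVarSums p 0 T x [0, T] (List.isChain_pair.2 hT.le) rfl (by simp)⟩
  have hneδ : (pVarSums p 0 (τ T) xδ).Nonempty :=
    ⟨_, list_mem_pVarSums p 0 (τ T) xδ [0, τ T] (List.isChain_pair.2 hτTpos) rfl (by simp)⟩
  have h1 : sSup (pVarSums p 0 (τ T) xδ) ≤ sSup (pVarSums p 0 T x) := csSup_le hneδ hkey
  have h2 : sSup (pVarSums p 0 T x) ≤ sSup (pVarSums p 0 (τ T) xδ) :=
    csSup_le_csSup ⟨sSup (pVarSums p 0 T x), fun S hS => hkey S hS⟩ hne hsub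
  rw [le_antisymm h1 h2]
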